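/- Let G be a finite abelian group with nondegenerate symmetric Z/2-valued pairing b, and let q(s) = arf(Ω_s) ∈ {±1} as above. Then q is a quadratic refinement of the pairing in the sense that q(s+x+y)·q(s) / (q(s+x)·q(s+y)) = (-1)^{b(x,y)} for all x, y ∈ G and any base point s. -/

import Mathlib

/-- The Arf invariant (normalized Gauss sum) `arf(Ω) = |G|^{-1/2} ∑_{x ∈ G} Ω(x)`. -/
noncomputable def arf {G : Type*} [Fintype G] (Ω : G → ℝ) : ℝ :=
  (Real.sqrt (Fintype.card G))⁻¹ * ∑ x, Ω x

lemma neg_one_pow_zmod2_add (a c : ZMod 2) :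
    ((-1 : ℝ)) ^ (a + c).val = (-1 : ℝ) ^ a.val * (-1 : ℝ) ^ c.val := by
  have h2 : ((2 : ZMod 2)).val = 0 := rfl
  rw [← pow_add, ZMod.val_add, ← neg_one_pow_eq_pow_mod_two]

/-- Let `G` be a finite abelian group with nondegenerate symmetric
`ℤ/2`-valued pairing `b`, `{Ω_s}` the torsor of `{±1}`-valued quadratic refinements of
`(-1)^b` (with `x ∈ G` acting by `Ω_{s+x}(y) = Ω_s(y)(-1)^{b(x,y)}`), and
`q(s) = arf(Ω_s)`.  Then `q` is a quadratic refinement of the pairing: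
`q(s+x+y)·q(s) / (q(s+x)·q(s+y)) = (-1)^{b(x,y)}` for all `x, y ∈ G`. -/
theorem arf_quadratic_refinement {G : Type*} [AddCommGroup G] [Fintype G]
    (b : G → G → ZMod 2)
    (hbadd₁ : ∀ x y z, b (x + y) z = b x z + b y z)
    (hbadd₂ : ∀ x y z, b x (y + z) = b x y + b x z)
    (hbsymm : ∀ x y, b x y = b y x)
    (hbnd : ∀ x, (∀ y, b x y = 0) → x = 0)
    (Ω : G → ℝ)
    (hval : ∀ x, Ω x = 1 ∨ Ω x = -1)
    (hquad : ∀ x y, Ω (x + y) = Ω x * Ω y * (-1 : ℝ) ^ (b x y).val)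
    (x y : G) :
    arf (fun z => Ω z * (-1 : ℝ) ^ (b (x + y) z).val) * arf Ω /
        (arf (fun z => Ω z * (-1 : ℝ) ^ (b x z).val) *
          arf (fun z => Ω z * (-1 : ℝ) ^ (b y z).val))
      = (-1 : ℝ) ^ (b x y).val := by
  classical
  have hsq : ∀ t, Ω t * Ω t = 1 := by
    intro t; rcases hval t with h | h <;> rw [h] <;> norm_num
  have hne : ∀ t, Ω t ≠ 0 := by
    intro t; rcases hval t with h | h <;> rw [h] <;> norm_num
  have hb0 : ∀ t, b t 0 = 0 := by
    intro t
    have := hbadd₂ t 0 0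
    simpa using this.symm
  set S := ∑ z, Ω z with hS
  -- shift formula
  have hshift : ∀ u, ∑ z, Ω z * (-1 : ℝ) ^ (b u z).val = Ω u * S := by
    intro u
    have h1 : ∀ z, Ω z * (-1 : ℝ) ^ (b u z).val = Ω u * Ω (z + u) := by
      intro z
      rw [hquad z u, hbsymm u z]
      linear_combination (-(Ω z * (-1 : ℝ) ^ (b z u).val)) * hsq u
    calc ∑ z, Ω z * (-1 : ℝ) ^ (b u z).val = ∑ z, Ω u * Ω (z + u) := by
          exact Finset.sum_congr rfl fun z _ => h1 z
      _ = Ω u * ∑ z, Ω (z + u) := by rw [Finset.mul_sum]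
      _ = Ω u * S := by
          rw [Fintype.sum_equiv (Equiv.addRight u) (fun z => Ω (z + u)) Ω (fun z => rfl)]
  -- orthogonality
  have horth : ∀ u, u ≠ 0 → ∑ z, ((-1 : ℝ)) ^ (b u z).val = 0 := by
    intro u hu
    obtain ⟨z₀, hz₀⟩ : ∃ z₀, b u z₀ ≠ 0 := by
      by_contra h
      push_neg at h
      exact hu (hbnd u h)
    have hz1 : b u z₀ = 1 := by
      have h01 : ∀ a : ZMod 2, a ≠ 0 → a = 1 := by decide
      exact h01 _ hz₀
    have hT : ∑ z, ((-1 : ℝ)) ^ (b u z).val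
        = ∑ z, ((-1 : ℝ)) ^ (b u (z + z₀)).val := by
      exact (Fintype.sum_equiv (Equiv.addRight z₀) _ _ (fun z => rfl)).symm
    have hT2 : ∑ z, ((-1 : ℝ)) ^ (b u (z + z₀)).val
        = - ∑ z, ((-1 : ℝ)) ^ (b u z).val := by
      rw [← Finset.sum_neg_distrib]
      refine Finset.sum_congr rfl fun z _ => ?_
      rw [hbadd₂, neg_one_pow_zmod2_add, hz1]
      norm_num [show ((1 : ZMod 2)).val = 1 from rfl]
    have := hT.trans hT2
    linarith
  -- S² = |G|
  have hSsq : S * S = (Fintype.card G : ℝ) := by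
    have h1 : S * S = ∑ z, ∑ u, Ω z * Ω (z + u) := by
      rw [hS, Finset.sum_mul_sum]
      refine Finset.sum_congr rfl fun z _ => ?_
      exact (Fintype.sum_equiv (Equiv.addLeft z) (fun u => Ω z * Ω (z + u))
        (fun j => Ω z * Ω j) (fun u => rfl)).symm
    have h2 : ∀ z u, Ω z * Ω (z + u) = Ω u * ((-1 : ℝ)) ^ (b z u).val := by
      intro z u
      rw [hquad z u]
      linear_combination (Ω u * (-1 : ℝ) ^ (b z u).val) * hsq z
    have h3 : S * S = ∑ u, Ω u * ∑ z, ((-1 : ℝ)) ^ (b z u).val := by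
      rw [h1, Finset.sum_comm]
      refine Finset.sum_congr rfl fun u _ => ?_
      rw [Finset.mul_sum]
      exact Finset.sum_congr rfl fun z _ => h2 z u
    have h4 : ∀ u, Ω u * ∑ z, ((-1 : ℝ)) ^ (b z u).val
        = if u = 0 then (Fintype.card G : ℝ) else 0 := by
      intro u
      by_cases hu : u = 0
      · subst hu
        simp only [if_true]
        have hΩ0 : Ω 0 = 1 := by
          have := hquad 0 0
          simp [hb0] at this
          nlinarith [hsq 0, hval 0]
        have : ∑ z, ((-1 : ℝ)) ^ (b z 0).val = (Fintype.card G : ℝ) := by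
          simp [hb0]
        rw [hΩ0, this, one_mul]
      · simp only [hu, if_false]
        have : ∑ z, ((-1 : ℝ)) ^ (b z u).val = 0 := by
          rw [Finset.sum_congr rfl (fun z _ => by rw [hbsymm z u])]
          exact horth u hu
        rw [this, mul_zero]
    rw [h3, Finset.sum_congr rfl (fun u _ => h4 u), Finset.sum_ite_eq'
      Finset.univ (0 : G) (fun _ => (Fintype.card G : ℝ))]
    simp
  have hcardpos : (0 : ℝ) < (Fintype.card G : ℝ) := by
    exact_mod_cast Fintype.card_pos
  have hSne : S ≠ 0 := by
    intro h
    rw [h, zero_mul] at hSsq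
    linarith
  have hcne : (Real.sqrt (Fintype.card G))⁻¹ ≠ 0 := by
    simp [Real.sqrt_eq_zero', not_le, hcardpos, ne_of_gt hcardpos]
  -- main computation
  unfold arf
  rw [hshift (x + y), hshift x, hshift y, hquad x y]
  rw [div_eq_iff (mul_ne_zero (mul_ne_zero hcne (mul_ne_zero (hne x) hSne))
    (mul_ne_zero hcne (mul_ne_zero (hne y) hSne)))]
  ring
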